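/- Let π be a transition matrix over a finite set V with π(x,x) = 0 for every non-absorbing state x. Then there exists a non-Archimedean ordered field K, a weighted graph b over V with values in K, and U ⊆ V such that π = π_U^b if and only if there is a function β : V → ℝ⁺ such that π(x,y)β(x) = π(y,x)β(y) for all x, y in the same irreducible class. -/

import Mathlib

open Classical
open scoped ENNReal

namespace NAG

/-- The real part of an at most finite element of an ordered field:
the supremum of the rationals below it. -/
noncomputable def rp {K : Type*} [Field K] [LinearOrder K] [IsStrictOrderedRing K] (k : K) : ℝ :=
  sSup {r : ℝ | ∃ q : ℚ, r = (q : ℝ) ∧ (q : K) ≤ k}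

/-- `k₁ ≃ k₂` : the quotient is bounded above and below by positive rationals. -/
def Comparable {K : Type*} [Field K] [LinearOrder K] [IsStrictOrderedRing K] (k₁ k₂ : K) : Prop :=
  ∃ c₁ c₂ : ℚ, 0 < c₁ ∧ 0 < c₂ ∧ (c₁ : K) < k₁ / k₂ ∧ k₁ / k₂ < (c₂ : K)

/-- `k₁ ≺≺ k₂` : the quotient is smaller than every positive rational. -/
def MuchLT {K : Type*} [Field K] [LinearOrder K] [IsStrictOrderedRing K] (k₁ k₂ : K) : Prop :=
  ∀ c : ℚ, 0 < c → k₁ / k₂ < (c : K)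

/-- `k₁ ≾ k₂` : the quotient is bounded above by some positive rational. -/
def LessSim {K : Type*} [Field K] [LinearOrder K] [IsStrictOrderedRing K] (k₁ k₂ : K) : Prop :=
  ∃ c : ℚ, 0 < c ∧ k₁ / k₂ < (c : K)

/-- A (locally finite) weighted graph over `V` with values in an ordered field `K`. -/
structure Graph (V K : Type*) [Field K] [LinearOrder K] [IsStrictOrderedRing K] where
  w : V → V → K
  symm : ∀ x y, w x y = w y x
  nonneg : ∀ x y, 0 ≤ w x y
  loopless : ∀ x, w x x = 0
  locFin : ∀ x, {y | w x y ≠ 0}.Finite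

variable {V K : Type*} [Field K] [LinearOrder K] [IsStrictOrderedRing K]

/-- `b(x) = Σ_y b(x,y)`. -/
noncomputable def Graph.deg (G : Graph V K) (x : V) : K := ∑ᶠ y, G.w x y

def Graph.Adj (G : Graph V K) (x y : V) : Prop := 0 < G.w x y

def Graph.Connected (G : Graph V K) : Prop :=
  ∀ x y : V, ∃ (n : ℕ) (p : ℕ → V), p 0 = x ∧ p n = y ∧ ∀ i < n, G.Adj (p i) (p (i + 1))

def Graph.ConnectedOn (G : Graph V K) (S : Set V) : Prop :=
  ∀ x ∈ S, ∀ y ∈ S, ∃ (n : ℕ) (p : ℕ → V),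
    p 0 = x ∧ p n = y ∧ (∀ i ≤ n, p i ∈ S) ∧ ∀ i < n, G.Adj (p i) (p (i + 1))

/-- normalized weight `p(x,y) = b(x,y)/b(x)`. -/
noncomputable def Graph.p (G : Graph V K) (x y : V) : K := G.w x y / G.deg x

/-- The real transition matrix `π_U^b`. -/
noncomputable def Graph.pi (G : Graph V K) (U : Set V) (x y : V) : ℝ :=
  if x ∈ U then rp (G.p x y) else if x = y then 1 else 0

/-- A directed path of length `n` from `x` to `y` for a real kernel `m`. -/
def DirPath {V : Type*} (m : V → V → ℝ) (x y : V) (n : ℕ) (p : ℕ → V) : Prop :=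
  p 0 = x ∧ p n = y ∧ ∀ i < n, 0 < m (p i) (p (i + 1))

/-- `x → y` : reachability by directed paths. -/
def Reaches {V : Type*} (m : V → V → ℝ) (x y : V) : Prop :=
  x = y ∨ ∃ n p, DirPath m x y n p

/-- `x ↔ y` : mutual reachability (same strongly connected component). -/
def SameSCC {V : Type*} (m : V → V → ℝ) (x y : V) : Prop :=
  Reaches m x y ∧ Reaches m y x

/-- A realization of a transition matrix `π` over `V` as the real transition
matrix `π_U^b` of a weighted graph `b` over a non-Archimedean ordered field. -/
structure NARealization (V : Type*) (π : V → V → ℝ) where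
  K : Type
  [inst : Field K]
  [instLO : LinearOrder K]
  [instSOR : IsStrictOrderedRing K]
  τ : K
  τpos : 0 < τ
  τsmall : ∀ n : ℕ, 0 < n → τ < 1 / (n : K)
  G : Graph V K
  U : Set V
  agrees : ∀ x y, Graph.pi G U x y = π x y


/-! ### Auxiliary lemmas -/

section rp
variable {K : Type*} [Field K] [LinearOrder K] [IsStrictOrderedRing K]

def cutSet (k : K) : Set ℝ := {r : ℝ | ∃ q : ℚ, r = (q : ℝ) ∧ (q : K) ≤ k}

lemma rp_def (k : K) : rp k = sSup (cutSet k) := rfl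

lemma cut_nonempty {k : K} (hk : 0 ≤ k) : (cutSet k).Nonempty :=
  ⟨0, 0, by simp, by simpa using hk⟩

lemma cut_bdd {k : K} {C : ℚ} (hC : k ≤ (C : K)) : BddAbove (cutSet k) := by
  refine ⟨(C : ℝ), ?_⟩
  rintro r ⟨q, rfl, hq⟩
  exact_mod_cast (Rat.cast_le (K := K)).1 (hq.trans hC)

lemma le_rp {k : K} {q C : ℚ} (hC : k ≤ (C : K)) (h : (q : K) ≤ k) : (q : ℝ) ≤ rp k :=
  le_csSup (cut_bdd hC) ⟨q, rfl, h⟩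

lemma rp_le {k : K} {q : ℚ} (hk : 0 ≤ k) (h : k ≤ (q : K)) : rp k ≤ (q : ℝ) := by
  refine csSup_le (cut_nonempty hk) ?_
  rintro r ⟨q', rfl, hq'⟩
  exact_mod_cast (Rat.cast_le (K := K)).1 (hq'.trans h)

lemma rp_nonneg {k : K} (hk : 0 ≤ k) {C : ℚ} (hC : k ≤ (C : K)) : 0 ≤ rp k := by
  have := le_rp (q := 0) hC (by simpa using hk)
  simpa using this

lemma rp_ratCast {q : ℚ} (hq : 0 ≤ q) : rp ((q : K)) = (q : ℝ) :=
  le_antisymm (rp_le (by exact_mod_cast hq) le_rfl) (le_rp le_rfl le_rfl)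

lemma rp_zero : rp (0 : K) = 0 := by simpa using rp_ratCast (K := K) (q := 0) le_rfl

lemma rp_one : rp (1 : K) = 1 := by simpa using rp_ratCast (K := K) (q := 1) zero_le_one

/-- if `rp k < s` then `k ≤ s`. -/
lemma le_of_rp_lt {k : K} {s C : ℚ} (hC : k ≤ (C : K)) (h : rp k < (s : ℝ)) : k ≤ (s : K) := by
  by_contra hs
  push_neg at hs
  exact absurd (le_rp hC hs.le) (not_le.2 h)

/-- if `s < rp k` then `s ≤ k`. -/
lemma le_of_lt_rp {k : K} {s : ℚ} (hk : 0 ≤ k) (h : (s : ℝ) < rp k) : (s : K) ≤ k := by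
  obtain ⟨r, hr, hsr⟩ := exists_lt_of_lt_csSup (cut_nonempty hk) h
  obtain ⟨q, rfl, hq⟩ := hr
  have : (s : ℚ) ≤ q := by exact_mod_cast hsr.le
  exact le_trans (by exact_mod_cast this) hq

lemma rp_eq {k : K} {r : ℝ} (h0 : 0 ≤ k)
    (h₁ : ∀ q : ℚ, (q : ℝ) < r → (q : K) ≤ k)
    (h₂ : ∀ q : ℚ, r < (q : ℝ) → k ≤ (q : K)) : rp k = r := by
  obtain ⟨C, hC⟩ := exists_rat_gt r
  have hkC : k ≤ (C : K) := h₂ C hC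
  refine le_antisymm (csSup_le (cut_nonempty h0) ?_) ?_
  · rintro s ⟨q, rfl, hq⟩
    by_contra hlt
    push_neg at hlt
    obtain ⟨q'', hq''1, hq''2⟩ := exists_rat_btwn hlt
    have h1 : k ≤ (q'' : K) := h₂ q'' hq''1
    have : (q : K) ≤ (q'' : K) := hq.trans h1
    have : (q : ℝ) ≤ (q'' : ℝ) := by exact_mod_cast (Rat.cast_le (K := K)).1 this
    linarith
  · by_contra hlt
    push_neg at hlt
    obtain ⟨q, hq1, hq2⟩ := exists_rat_btwn hlt
    exact absurd (le_rp hkC (h₁ q hq2)) (not_le.2 hq1)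

lemma rp_mul {a b : K} {A B : ℚ} (ha0 : 0 ≤ a) (hA : a ≤ (A : K))
    (hb0 : 0 ≤ b) (hB : b ≤ (B : K)) : rp (a * b) = rp a * rp b := by
  have hab0 : 0 ≤ a * b := mul_nonneg ha0 hb0
  have hABcast : a * b ≤ ((A * B : ℚ) : K) := by
    push_cast
    exact mul_le_mul hA hB hb0 (le_trans ha0 hA)
  set α := rp a with hαdef
  set β := rp b with hβdef
  have hα0 : 0 ≤ α := rp_nonneg ha0 hA
  have hβ0 : 0 ≤ β := rp_nonneg hb0 hB
  have hr0 : 0 ≤ rp (a * b) := rp_nonneg hab0 hABcast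
  -- upper bound step
  have step1 : ∀ s t : ℚ, α < (s : ℝ) → β < (t : ℝ) → rp (a * b) ≤ (s : ℝ) * (t : ℝ) := by
    intro s t hs ht
    have has : a ≤ (s : K) := le_of_rp_lt hA hs
    have hbt : b ≤ (t : K) := le_of_rp_lt hB ht
    have hs0 : (0:K) ≤ (s : K) := le_trans ha0 has
    have habst : a * b ≤ ((s * t : ℚ) : K) := by
      push_cast
      exact mul_le_mul has hbt hb0 hs0
    have := rp_le hab0 habst
    push_cast at this
    exact this
  -- lower bound step
  have step2 : ∀ s t : ℚ, 0 ≤ s → 0 ≤ t → (s : ℝ) < α → (t : ℝ) < β →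
      (s : ℝ) * (t : ℝ) ≤ rp (a * b) := by
    intro s t hs0 ht0 hs ht
    have has : (s : K) ≤ a := le_of_lt_rp ha0 hs
    have hbt : (t : K) ≤ b := le_of_lt_rp hb0 ht
    have : ((s * t : ℚ) : K) ≤ a * b := by
      push_cast
      exact mul_le_mul has hbt (by exact_mod_cast ht0) ha0
    have := le_rp hABcast this
    push_cast at this
    exact this
  refine le_antisymm ?_ ?_
  · by_contra hlt
    push_neg at hlt
    set δ := rp (a * b) - α * β with hδdef
    have hδ : 0 < δ := by simp [hδdef]; linarith
    set e := min 1 (δ / (α + β + 2)) with hedef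
    have he : 0 < e := lt_min one_pos (by positivity)
    obtain ⟨s, hs1, hs2⟩ := exists_rat_btwn (show α < α + e by linarith)
    obtain ⟨t, ht1, ht2⟩ := exists_rat_btwn (show β < β + e by linarith)
    have h1 := step1 s t hs1 ht1
    have he1 : e ≤ 1 := min_le_left _ _
    have he2 : e ≤ δ / (α + β + 2) := min_le_right _ _
    have he3 : e * (α + β + 2) ≤ δ := by
      rw [div_eq_mul_inv] at he2
      have : (0:ℝ) < α + β + 2 := by linarith
      calc e * (α + β + 2) ≤ δ * (α + β + 2)⁻¹ * (α + β + 2) :=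
            mul_le_mul_of_nonneg_right he2 this.le
        _ = δ := by field_simp
    nlinarith [mul_le_mul hs2.le ht2.le (by linarith : (0:ℝ) ≤ (t:ℝ)) (by linarith : (0:ℝ) ≤ α + e)]
  · by_contra hlt
    push_neg at hlt
    have hαpos : 0 < α := by
      rcases lt_or_eq_of_le hα0 with h | h
      · exact h
      · exfalso; rw [← h] at hlt; simp at hlt; linarith
    have hβpos : 0 < β := by
      rcases lt_or_eq_of_le hβ0 with h | h
      · exact h
      · exfalso; rw [← h] at hlt; simp at hlt; linarith
    set δ := α * β - rp (a * b) with hδdef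
    have hδ : 0 < δ := by simp [hδdef]; linarith
    set e := min (min α β) (δ / (α + β + 1)) with hedef
    have he : 0 < e := lt_min (lt_min hαpos hβpos) (by positivity)
    have heα : e ≤ α := le_trans (min_le_left _ _) (min_le_left _ _)
    have heβ : e ≤ β := le_trans (min_le_left _ _) (min_le_right _ _)
    have he2 : e ≤ δ / (α + β + 1) := min_le_right _ _
    have he3 : e * (α + β + 1) ≤ δ := by
      rw [div_eq_mul_inv] at he2
      have : (0:ℝ) < α + β + 1 := by linarith
      calc e * (α + β + 1) ≤ δ * (α + β + 1)⁻¹ * (α + β + 1) :=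
            mul_le_mul_of_nonneg_right he2 this.le
        _ = δ := by field_simp
    obtain ⟨s, hs1, hs2⟩ := exists_rat_btwn (show α - e < α by linarith)
    obtain ⟨t, ht1, ht2⟩ := exists_rat_btwn (show β - e < β by linarith)
    have hs0 : (0:ℝ) ≤ (s:ℝ) := by linarith
    have ht0 : (0:ℝ) ≤ (t:ℝ) := by linarith
    have h2 := step2 s t (by exact_mod_cast hs0) (by exact_mod_cast ht0) hs2 ht2
    nlinarith [mul_le_mul hs1.le ht1.le (by linarith : (0:ℝ) ≤ β - e) hs0]

end rp

section reach
variable {V : Type*} {m : V → V → ℝ}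

lemma reaches_refl (x : V) : Reaches m x x := Or.inl rfl

lemma reaches_of_pos {x y : V} (h : 0 < m x y) : Reaches m x y := by
  refine Or.inr ⟨1, fun i => if i = 0 then x else y, rfl, rfl, ?_⟩
  intro i hi
  interval_cases i
  simpa using h

lemma reaches_trans {x y z : V} (h₁ : Reaches m x y) (h₂ : Reaches m y z) :
    Reaches m x z := by
  rcases h₁ with rfl | ⟨n, p, hp0, hpn, hpe⟩
  · exact h₂
  rcases h₂ with rfl | ⟨k, q, hq0, hqk, hqe⟩
  · exact Or.inr ⟨n, p, hp0, hpn, hpe⟩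
  refine Or.inr ⟨n + k, fun i => if i < n then p i else q (i - n), ?_, ?_, ?_⟩
  · by_cases h : 0 < n
    · simp [h]
      exact hp0
    · have : n = 0 := by omega
      subst this
      simpa using (by rw [hq0, ← hpn, hp0] : q 0 = x)
  · have : ¬ (n + k < n) := by omega
    simp [this]
    simpa using hqk
  · intro i hi
    by_cases h1 : i + 1 < n
    · have h2 : i < n := by omega
      simp [h1, h2]
      exact hpe i h2
    · by_cases h2 : i < n
      · have h3 : i + 1 = n := by omega
        simp [h1, h2, h3]
        have := hpe i h2
        rwa [show p (i+1) = q 0 by rw [hq0, ← hpn, h3]] at this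
      · have h3 : ¬ (i + 1 < n) := by omega
        simp [h2, h3]
        have h4 : i - n < k := by omega
        have := hqe (i - n) h4
        rwa [show i - n + 1 = i + 1 - n by omega] at this

lemma sameSCC_refl (x : V) : SameSCC m x x := ⟨reaches_refl x, reaches_refl x⟩

lemma sameSCC_symm {x y : V} (h : SameSCC m x y) : SameSCC m y x := ⟨h.2, h.1⟩

lemma sameSCC_trans {x y z : V} (h₁ : SameSCC m x y) (h₂ : SameSCC m y z) :
    SameSCC m x z :=
  ⟨reaches_trans h₁.1 h₂.1, reaches_trans h₂.2 h₁.2⟩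

/-- If `x` only moves to itself, then it reaches only itself. -/
lemma reaches_eq_of_diag {x y : V} (hx : ∀ z, z ≠ x → m x z ≤ 0)
    (h : Reaches m x y) : y = x := by
  rcases h with rfl | ⟨n, p, hp0, hpn, hpe⟩
  · rfl
  have key : ∀ i ≤ n, p i = x := by
    intro i hi
    induction i with
    | zero => exact hp0
    | succ j ih =>
      have hj : p j = x := ih (by omega)
      have := hpe j (by omega)
      rw [hj] at this
      by_contra hne
      exact absurd this (not_lt.2 (hx _ hne))
  rw [← hpn]
  exact key n le_rfl

variable [Fintype V]

noncomputable def dd (m : V → V → ℝ) (x : V) : ℕ :=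
  Set.ncard {z | Reaches m x z ∧ ¬ Reaches m z x}

lemma dd_eq_of_scc {x y : V} (h : SameSCC m x y) : dd m x = dd m y := by
  unfold dd
  congr 1
  ext z
  simp only [Set.mem_setOf_eq]
  constructor
  · rintro ⟨h1, h2⟩
    exact ⟨reaches_trans h.2 h1, fun hc => h2 (reaches_trans hc h.2)⟩
  · rintro ⟨h1, h2⟩
    exact ⟨reaches_trans h.1 h1, fun hc => h2 (reaches_trans hc h.1)⟩

lemma dd_lt {x y : V} (hxy : Reaches m x y) (hyx : ¬ Reaches m y x) :
    dd m y < dd m x := by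
  apply Set.ncard_lt_ncard
  · constructor
    · intro z hz
      simp only [Set.mem_setOf_eq] at hz ⊢
      exact ⟨reaches_trans hxy hz.1, fun hc => hz.2 (reaches_trans hc hxy)⟩
    · intro hsub
      have : y ∈ {z | Reaches m x z ∧ ¬ Reaches m z x} := ⟨hxy, hyx⟩
      have h2 := hsub this
      simp only [Set.mem_setOf_eq] at h2
      exact h2.2 (reaches_refl y)
  · exact Set.toFinite _

lemma dd_le_of_reaches {x y : V} (hxy : Reaches m x y) : dd m y ≤ dd m x := by
  by_cases h : Reaches m y x
  · exact (dd_eq_of_scc ⟨h, hxy⟩).le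
  · exact (dd_lt hxy h).le

end reach

section graphfacts
variable {V K : Type*} [Field K] [LinearOrder K] [IsStrictOrderedRing K] [Fintype V]

lemma Graph.deg_eq_sum (G : Graph V K) (x : V) : G.deg x = ∑ y, G.w x y :=
  finsum_eq_sum_of_fintype _

lemma Graph.deg_nonneg (G : Graph V K) (x : V) : 0 ≤ G.deg x := by
  rw [G.deg_eq_sum]
  exact Finset.sum_nonneg fun y _ => G.nonneg x y

lemma Graph.w_le_deg (G : Graph V K) (x y : V) : G.w x y ≤ G.deg x := by
  rw [G.deg_eq_sum]
  exact Finset.single_le_sum (fun z _ => G.nonneg x z) (Finset.mem_univ y)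

lemma Graph.p_nonneg (G : Graph V K) (x y : V) : 0 ≤ G.p x y :=
  div_nonneg (G.nonneg x y) (G.deg_nonneg x)

lemma Graph.p_le_one (G : Graph V K) (x y : V) : G.p x y ≤ 1 := by
  rcases lt_or_eq_of_le (G.deg_nonneg x) with h | h
  · exact (div_le_one h).2 (G.w_le_deg x y)
  · unfold Graph.p
    rw [← h, div_zero]
    exact zero_le_one

end graphfacts

section forward
variable {V : Type*} [Fintype V]

lemma forward (π : V → V → ℝ) (hrow : ∀ x, ∑ y, π x y = 1)
    (R : NARealization V π) :
    ∃ β : V → ℝ, (∀ x, 0 < β x) ∧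
      ∀ x y, SameSCC π x y → π x y * β x = π y x * β y := by
  obtain ⟨K, τ, τpos, τsmall, G, U, hagree0⟩ := R
  have hagree : ∀ x y, (if x ∈ U then rp (G.p x y) else if x = y then (1:ℝ) else 0) = π x y :=
    hagree0
  have hUc : ∀ x ∉ U, ∀ y, π x y = if x = y then 1 else 0 := by
    intro x hx y
    rw [← hagree x y]
    simp [hx]
  have hUo : ∀ x ∈ U, ∀ y, π x y = rp (G.p x y) := by
    intro x hx y
    rw [← hagree x y]
    simp [hx]
  have hdegpos : ∀ x ∈ U, 0 < G.deg x := by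
    intro x hx
    rcases lt_or_eq_of_le (G.deg_nonneg x) with h | h
    · exact h
    · exfalso
      have hzero : ∀ y, π x y = 0 := by
        intro y
        rw [hUo x hx y]
        unfold Graph.p
        rw [← h, div_zero, rp_zero]
      have := hrow x
      rw [Finset.sum_congr rfl (fun y _ => hzero y)] at this
      simp at this
  have hedge : ∀ u v : V, 0 < π u v → ∃ c : ℚ, 0 < c ∧ (c : K) * G.deg u ≤ G.deg v := by
    intro u v huv
    by_cases hev : u = v
    · subst hev; exact ⟨1, one_pos, by simp⟩
    · have hu : u ∈ U := by
        by_contra hu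
        rw [hUc u hu v, if_neg hev] at huv
        exact lt_irrefl _ huv
      have hdu := hdegpos u hu
      rw [hUo u hu v] at huv
      obtain ⟨c, hc0, hc1⟩ := exists_rat_btwn huv
      have hc0' : (0:ℚ) < c := by exact_mod_cast hc0
      refine ⟨c, hc0', ?_⟩
      have hle : (c : K) ≤ G.p u v := le_of_lt_rp (G.p_nonneg u v) hc1
      have : (c : K) * G.deg u ≤ G.w u v := by
        rw [← le_div_iff₀ hdu]
        exact hle
      calc (c : K) * G.deg u ≤ G.w u v := this
        _ = G.w v u := G.symm u v
        _ ≤ G.deg v := G.w_le_deg v u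
  have hchain : ∀ x y : V, Reaches π x y →
      ∃ c : ℚ, 0 < c ∧ (c : K) * G.deg x ≤ G.deg y := by
    rintro x y (rfl | ⟨n, p, hp0, hpn, hpe⟩)
    · exact ⟨1, one_pos, by simp⟩
    have key : ∀ i, i ≤ n → ∃ c : ℚ, 0 < c ∧ (c : K) * G.deg (p 0) ≤ G.deg (p i) := by
      intro i
      induction i with
      | zero => intro _; exact ⟨1, one_pos, by simp⟩
      | succ j ih =>
        intro hj
        obtain ⟨c, hc, hcle⟩ := ih (by omega)
        obtain ⟨c', hc', hcle'⟩ := hedge _ _ (hpe j (by omega))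
        refine ⟨c' * c, mul_pos hc' hc, ?_⟩
        have h1 : ((c' * c : ℚ) : K) * G.deg (p 0) = (c' : K) * ((c : K) * G.deg (p 0)) := by
          push_cast; ring
        rw [h1]
        calc (c' : K) * ((c : K) * G.deg (p 0)) ≤ (c' : K) * G.deg (p j) :=
              mul_le_mul_of_nonneg_left hcle (by exact_mod_cast hc'.le)
          _ ≤ G.deg (p (j + 1)) := hcle'
    obtain ⟨c, hc, hcle⟩ := key n le_rfl
    rw [hp0, hpn] at hcle
    exact ⟨c, hc, hcle⟩
  -- representative of each SCC
  letI s : Setoid V := ⟨SameSCC π, ⟨fun x => sameSCC_refl x, sameSCC_symm, sameSCC_trans⟩⟩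
  set r : V → V := fun x => Quotient.out (Quotient.mk s x) with hrdef
  have hr1 : ∀ x, SameSCC π x (r x) := fun x => sameSCC_symm (Quotient.mk_out x)
  have hr2 : ∀ x y, SameSCC π x y → r x = r y := fun x y h =>
    congrArg Quotient.out (Quotient.sound h)
  have hUscc : ∀ x y : V, SameSCC π x y → x ≠ y → x ∈ U := by
    intro x y hscc hne
    by_contra hx
    refine hne ?_
    have := reaches_eq_of_diag (m := π) (x := x) (y := y) ?_ hscc.1
    · exact this.symm
    · intro z hz
      rw [hUc x hx z, if_neg (fun h => hz (h.symm))]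
  have hrepU : ∀ x ∈ U, r x ∈ U := by
    intro x hx
    by_cases h : r x = x
    · rwa [h]
    · exact hUscc (r x) x (sameSCC_symm (hr1 x)) h
  have bounds : ∀ x ∈ U, ∃ c C : ℚ, 0 < c ∧
      (c : K) ≤ G.deg x / G.deg (r x) ∧ G.deg x / G.deg (r x) ≤ (C : K) := by
    intro x hx
    have hz : r x ∈ U := hrepU x hx
    have hdz : 0 < G.deg (r x) := hdegpos _ hz
    obtain ⟨c, hc, hcle⟩ := hchain (r x) x (hr1 x).2
    obtain ⟨c', hc', hcle'⟩ := hchain x (r x) (hr1 x).1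
    refine ⟨c, 1 / c', hc, ?_, ?_⟩
    · rw [le_div_iff₀ hdz]
      exact hcle
    · rw [div_le_iff₀ hdz]
      push_cast
      rw [div_mul_eq_mul_div, le_div_iff₀ (by exact_mod_cast hc' : (0:K) < (c' : K))]
      calc G.deg x * (c' : K) = (c' : K) * G.deg x := mul_comm _ _
        _ ≤ G.deg (r x) := hcle'
        _ = G.deg (r x) * 1 := (mul_one _).symm
        _ ≤ 1 * G.deg (r x) := by rw [mul_one, one_mul]
  refine ⟨fun x => if x ∈ U then rp (G.deg x / G.deg (r x)) else 1, ?_, ?_⟩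
  · intro x
    by_cases hx : x ∈ U
    · simp only [if_pos hx]
      obtain ⟨c, C, hc, h1, h2⟩ := bounds x hx
      have := le_rp h2 h1
      have hc' : (0:ℝ) < (c : ℝ) := by exact_mod_cast hc
      linarith
    · simp [hx]
  · intro x y hscc
    by_cases hne : x = y
    · subst hne; rfl
    have hx : x ∈ U := hUscc x y hscc hne
    have hy : y ∈ U := hUscc y x (sameSCC_symm hscc) (fun h => hne h.symm)
    have hzU : r x ∈ U := hrepU x hx
    have hdx : 0 < G.deg x := hdegpos x hx
    have hdy : 0 < G.deg y := hdegpos y hy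
    have hdz : 0 < G.deg (r x) := hdegpos _ hzU
    have hry : r y = r x := (hr2 x y hscc).symm
    simp only [if_pos hx, if_pos hy, hry]
    obtain ⟨c, C, hc, hb1, hb2⟩ := bounds x hx
    obtain ⟨c', C', hc', hb1', hb2'⟩ := bounds y hy
    rw [hry] at hb1' hb2'
    rw [hUo x hx y, hUo y hy x]
    have key : ∀ u : V, u ∈ U → 0 < G.deg u → ∀ Cu : ℚ,
        G.deg u / G.deg (r x) ≤ (Cu : K) → ∀ v : V,
        rp (G.p u v) * rp (G.deg u / G.deg (r x)) = rp (G.w u v / G.deg (r x)) := by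
      intro u hu hdu Cu hCu v
      rw [← rp_mul (G.p_nonneg u v) (by exact_mod_cast G.p_le_one u v : G.p u v ≤ ((1:ℚ) : K))
        (div_nonneg (G.deg_nonneg u) (G.deg_nonneg (r x))) hCu]
      congr 1
      unfold Graph.p
      rw [div_mul_div_comm, mul_comm (G.w u v) (G.deg u), mul_div_mul_left _ _ (ne_of_gt hdu)]
    rw [key x hx hdx C hb2 y, key y hy hdy C' hb2' x, G.symm x y]

end forward



section backward
open Hyperreal

/-- The coercion `ℝ → ℝ*` as a ring homomorphism. -/
noncomputable def rh : ℝ →+* ℝ* :=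
  ⟨⟨⟨Hyperreal.ofReal, rfl⟩, fun _ _ => rfl⟩, rfl, fun _ _ => rfl⟩

lemma coe_rat (q : ℚ) : ((q : ℝ) : ℝ*) = (q : ℝ*) := by
  have := map_ratCast rh q
  rwa [show rh ((q : ℚ) : ℝ) = (((q : ℚ) : ℝ) : ℝ*) from rfl] at this

lemma coe_nat (n : ℕ) : ((n : ℝ) : ℝ*) = (n : ℝ*) := by
  have := map_natCast rh n
  rwa [show rh ((n : ℕ) : ℝ) = (((n : ℕ) : ℝ) : ℝ*) from rfl] at this

lemma coe_sum {α : Type*} (t : Finset α) (f : α → ℝ) :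
    ((∑ i ∈ t, f i : ℝ) : ℝ*) = ∑ i ∈ t, ((f i : ℝ) : ℝ*) :=
  map_sum rh f t

variable {V : Type*} [Fintype V]

set_option maxHeartbeats 2000000 in
noncomputable def backward (π : V → V → ℝ)
    (hrange : ∀ x y, 0 ≤ π x y ∧ π x y ≤ 1)
    (hrow : ∀ x, ∑ y, π x y = 1)
    (hdiag : ∀ x, π x x ≠ 1 → π x x = 0)
    (β : V → ℝ) (hβ : ∀ x, 0 < β x)
    (hbal : ∀ x y, SameSCC π x y → π x y * β x = π y x * β y) :
    NARealization V π := by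
  classical
  set d : V → ℕ := dd π with hd
  set a : V → V → ℝ := fun x y => β x * π x y with ha
  have ha0 : ∀ x y, 0 ≤ a x y := fun x y => mul_nonneg (hβ x).le (hrange x y).1
  have hds : ∀ x y, 0 < π x y → d y ≤ d x := fun x y h =>
    dd_le_of_reaches (reaches_of_pos h)
  have hasym : ∀ x y, d x = d y → a x y = a y x := by
    intro x y hdxy
    by_cases hscc : SameSCC π x y
    · have := hbal x y hscc
      simp only [ha]
      linarith
    · have h1 : π x y = 0 := by
        by_contra h
        have hp : 0 < π x y := lt_of_le_of_ne (hrange x y).1 (Ne.symm h)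
        have hxy : Reaches π x y := reaches_of_pos hp
        have hnyx : ¬ Reaches π y x := fun hyx => hscc ⟨hxy, hyx⟩
        exact absurd hdxy.symm (ne_of_lt (dd_lt hxy hnyx))
      have h2 : π y x = 0 := by
        by_contra h
        have hp : 0 < π y x := lt_of_le_of_ne (hrange y x).1 (Ne.symm h)
        have hyx : Reaches π y x := reaches_of_pos hp
        have hnxy : ¬ Reaches π x y := fun hxy => hscc ⟨hxy, hyx⟩
        exact absurd hdxy (ne_of_lt (dd_lt hyx hnxy))
      simp [ha, h1, h2]
  have habs : ∀ x, π x x = 1 → ∀ y, y ≠ x → π x y = 0 := by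
    intro x hx y hy
    have hsplit : π x x + ∑ z ∈ Finset.univ.erase x, π x z = 1 := by
      rw [Finset.add_sum_erase _ _ (Finset.mem_univ x)]
      exact hrow x
    have hzero : ∑ z ∈ Finset.univ.erase x, π x z = 0 := by linarith
    exact (Finset.sum_eq_zero_iff_of_nonneg (fun z _ => (hrange x z).1)).1 hzero y
      (Finset.mem_erase.2 ⟨hy, Finset.mem_univ y⟩)
  have hε0 : (0:ℝ*) ≤ ε := epsilon_pos.le
  have hε1 : ε ≤ 1 := (epsilon_lt_pos (r := 1) one_pos).le
  set w : V → V → ℝ* := fun x y => if x = y then 0 else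
    if d y ≤ d x then ((a x y : ℝ) : ℝ*) * ε ^ (d x) else ((a y x : ℝ) : ℝ*) * ε ^ (d y)
    with hw
  have hwnonneg : ∀ x y, 0 ≤ w x y := by
    intro x y
    by_cases h1 : x = y
    · simp [hw, h1]
    · by_cases h2 : d y ≤ d x
      · simp only [hw, if_neg h1, if_pos h2]
        exact mul_nonneg (coe_nonneg.2 (ha0 _ _)) (pow_nonneg hε0 _)
      · simp only [hw, if_neg h1, if_neg h2]
        exact mul_nonneg (coe_nonneg.2 (ha0 _ _)) (pow_nonneg hε0 _)
  have hwsymm : ∀ x y, w x y = w y x := by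
    intro x y
    by_cases hxy : x = y
    · rw [hxy]
    · simp only [hw, if_neg hxy, if_neg (Ne.symm hxy)]
      rcases lt_trichotomy (d x) (d y) with h | h | h
      · rw [if_neg (by omega), if_pos (by omega)]
      · rw [if_pos (by omega), if_pos (by omega), hasym x y h, h]
      · rw [if_pos (by omega), if_neg (by omega)]
  set G : Graph V ℝ* :=
    ⟨w, hwsymm, hwnonneg, fun x => by simp [hw], fun x => Set.toFinite _⟩ with hG
  have hGw : G.w = w := rfl
  have hGp : ∀ u v, G.p u v = w u v / G.deg u := fun _ _ => rfl
  set U : Set V := {x | π x x ≠ 1} with hU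
  -- degree bounds for non-absorbing states
  have degb : ∀ x : V, π x x = 0 →
      ((β x : ℝ) : ℝ*) * ε ^ (d x) ≤ G.deg x ∧
      G.deg x ≤ ((β x : ℝ) : ℝ*) * ε ^ (d x) +
        (((∑ z, a z x : ℝ)) : ℝ*) * ε ^ (d x + 1) := by
    intro x hx
    set P : V → Prop := fun y => y ≠ x ∧ d y ≤ d x with hP
    have hsum1 : ∑ y ∈ Finset.univ.filter P, π x y = 1 := by
      rw [← hrow x]
      apply Finset.sum_subset (Finset.filter_subset _ _)
      intro y _ hy
      simp only [Finset.mem_filter, Finset.mem_univ, true_and, hP] at hy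
      by_cases h1 : y = x
      · rw [h1]; exact hx
      · by_contra h2
        have hp : 0 < π x y := lt_of_le_of_ne (hrange x y).1 (Ne.symm h2)
        exact hy ⟨h1, hds x y hp⟩
    have hsplit : G.deg x = ∑ y ∈ Finset.univ.filter P, w x y +
        ∑ y ∈ Finset.univ.filter (fun y => ¬ P y), w x y := by
      rw [Graph.deg_eq_sum, hGw]
      exact (Finset.sum_filter_add_sum_filter_not Finset.univ P _).symm
    have hfirst : ∑ y ∈ Finset.univ.filter P, w x y = ((β x : ℝ) : ℝ*) * ε ^ (d x) := by
      have heach : ∀ y ∈ Finset.univ.filter P, w x y = ((a x y : ℝ) : ℝ*) * ε ^ (d x) := by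
        intro y hy
        simp only [Finset.mem_filter, Finset.mem_univ, true_and, hP] at hy
        show (if x = y then (0:ℝ*) else if d y ≤ d x then ((a x y : ℝ) : ℝ*) * ε ^ (d x)
          else ((a y x : ℝ) : ℝ*) * ε ^ (d y)) = ((a x y : ℝ) : ℝ*) * ε ^ (d x)
        rw [if_neg (fun h => hy.1 h.symm), if_pos hy.2]
      rw [Finset.sum_congr rfl heach, ← Finset.sum_mul, ← coe_sum]
      congr 2
      simp only [ha]
      rw [← Finset.mul_sum, hsum1, mul_one]
    have hsecond0 : 0 ≤ ∑ y ∈ Finset.univ.filter (fun y => ¬ P y), w x y :=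
      Finset.sum_nonneg fun y _ => hwnonneg x y
    have hsecond : ∑ y ∈ Finset.univ.filter (fun y => ¬ P y), w x y ≤
        (((∑ z, a z x : ℝ)) : ℝ*) * ε ^ (d x + 1) := by
      have hterm : ∀ y ∈ Finset.univ.filter (fun y => ¬ P y),
          w x y ≤ ((a y x : ℝ) : ℝ*) * ε ^ (d x + 1) := by
        intro y hy
        simp only [Finset.mem_filter, Finset.mem_univ, true_and, hP, not_and, not_le] at hy
        have hwdef : w x y = (if x = y then (0:ℝ*) else if d y ≤ d x
            then ((a x y : ℝ) : ℝ*) * ε ^ (d x) else ((a y x : ℝ) : ℝ*) * ε ^ (d y)) := rfl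
        by_cases h1 : y = x
        · subst h1
          rw [hwdef, if_pos rfl]
          exact mul_nonneg (coe_nonneg.2 (ha0 _ _)) (pow_nonneg hε0 _)
        · have h2 : d x < d y := hy h1
          rw [hwdef, if_neg (fun h => h1 h.symm), if_neg (by omega)]
          exact mul_le_mul_of_nonneg_left
            (pow_le_pow_of_le_one hε0 hε1 (by omega)) (coe_nonneg.2 (ha0 _ _))
      calc ∑ y ∈ Finset.univ.filter (fun y => ¬ P y), w x y
          ≤ ∑ y ∈ Finset.univ.filter (fun y => ¬ P y), ((a y x : ℝ) : ℝ*) * ε ^ (d x + 1) :=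
            Finset.sum_le_sum hterm
        _ ≤ ∑ y, ((a y x : ℝ) : ℝ*) * ε ^ (d x + 1) :=
            Finset.sum_le_sum_of_subset_of_nonneg (Finset.filter_subset _ _)
              (fun y _ _ => mul_nonneg (coe_nonneg.2 (ha0 _ _)) (pow_nonneg hε0 _))
        _ = (((∑ z, a z x : ℝ)) : ℝ*) * ε ^ (d x + 1) := by
            rw [coe_sum, Finset.sum_mul]
    constructor
    · rw [hsplit, hfirst]
      linarith
    · rw [hsplit, hfirst]
      linarith
  -- the realization
  have hagrees : ∀ x y, Graph.pi G U x y = π x y := by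
    intro x y
    unfold Graph.pi
    by_cases hxU : x ∈ U
    · rw [if_pos hxU]
      have hx0 : π x x = 0 := hdiag x hxU
      obtain ⟨hdegL, hdegU⟩ := degb x hx0
      have hβx : (0:ℝ*) < ((β x : ℝ) : ℝ*) := coe_pos.2 (hβ x)
      have hεdx : (0:ℝ*) < ε ^ (d x) := pow_pos epsilon_pos _
      have hD : (0:ℝ*) < G.deg x := lt_of_lt_of_le (mul_pos hβx hεdx) hdegL
      set Cx : ℝ := ∑ z, a z x with hCx
      have hCx0 : 0 ≤ Cx := Finset.sum_nonneg fun z _ => ha0 z x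
      by_cases hxy : x = y
      · subst hxy
        have : G.p x x = 0 := by
          rw [hGp, show w x x = 0 from if_pos rfl, zero_div]
        rw [this, rp_zero, hx0]
      · by_cases hcase : d y ≤ d x
        · -- main case: w x y = a x y * ε ^ d x
          have hwxy : w x y = ((a x y : ℝ) : ℝ*) * ε ^ (d x) := by
            show (if x = y then (0:ℝ*) else if d y ≤ d x then ((a x y : ℝ) : ℝ*) * ε ^ (d x)
              else ((a y x : ℝ) : ℝ*) * ε ^ (d y)) = _
            rw [if_neg hxy, if_pos hcase]
          apply rp_eq (G.p_nonneg x y)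
          · intro q hq
            by_cases hq0 : (q:ℝ) ≤ 0
            · refine le_trans ?_ (G.p_nonneg x y)
              rw [← coe_rat]
              exact coe_le_coe.2 hq0
            · push_neg at hq0
              rw [hGp, le_div_iff₀ hD, ← coe_rat, hwxy]
              set qR : ℝ := (q : ℝ) with hqR
              set δ : ℝ := a x y - qR * β x with hδ
              have hδ0 : 0 < δ := by
                have : qR * β x < π x y * β x := by
                  exact mul_lt_mul_of_pos_right hq (hβ x)
                simp only [hδ, ha]
                nlinarith
              have hden : (0:ℝ) < qR * Cx + 1 := by nlinarith
              set t : ℝ := δ / (qR * Cx + 1) with ht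
              have ht0 : 0 < t := div_pos hδ0 hden
              have hqC0 : (0:ℝ) ≤ qR * Cx := mul_nonneg hq0.le hCx0
              have hstep : (qR * Cx) * t ≤ δ := by
                rw [ht, ← mul_div_assoc, div_le_iff₀ hden]
                nlinarith
              have hreal : qR * β x + (qR * Cx) * t ≤ a x y := by
                simp only [hδ] at hstep
                linarith
              have hεt : ε ≤ ((t : ℝ) : ℝ*) := (epsilon_lt_pos (r := t) ht0).le
              calc (qR : ℝ*) * G.deg x
                  ≤ (qR : ℝ*) * (((β x : ℝ) : ℝ*) * ε ^ (d x) +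
                      ((Cx : ℝ) : ℝ*) * ε ^ (d x + 1)) :=
                    mul_le_mul_of_nonneg_left hdegU (coe_nonneg.2 hq0.le)
                _ = (((qR * β x : ℝ) : ℝ*) + ((qR * Cx : ℝ) : ℝ*) * ε) * ε ^ (d x) := by
                    push_cast
                    ring
                _ ≤ (((qR * β x : ℝ) : ℝ*) + ((qR * Cx : ℝ) : ℝ*) * ((t : ℝ) : ℝ*)) * ε ^ (d x) := by
                    apply mul_le_mul_of_nonneg_right _ (pow_nonneg hε0 _)
                    have : ((qR * Cx : ℝ) : ℝ*) * ε ≤ ((qR * Cx : ℝ) : ℝ*) * ((t : ℝ) : ℝ*) :=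
                      mul_le_mul_of_nonneg_left hεt (coe_nonneg.2 (by positivity))
                    linarith
                _ ≤ ((a x y : ℝ) : ℝ*) * ε ^ (d x) := by
                    apply mul_le_mul_of_nonneg_right _ (pow_nonneg hε0 _)
                    rw [← coe_mul, ← coe_add]
                    exact coe_le_coe.2 hreal
          · intro q hq
            rw [hGp, div_le_iff₀ hD, ← coe_rat, hwxy]
            calc ((a x y : ℝ) : ℝ*) * ε ^ (d x)
                ≤ (((π x y : ℝ)) : ℝ*) * (((β x : ℝ) : ℝ*) * ε ^ (d x)) := by
                  rw [← mul_assoc, ← coe_mul]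
                  apply mul_le_mul_of_nonneg_right _ (pow_nonneg hε0 _)
                  apply coe_le_coe.2
                  simp only [ha]
                  nlinarith [hβ x]
              _ ≤ ((π x y : ℝ) : ℝ*) * G.deg x :=
                  mul_le_mul_of_nonneg_left hdegL (coe_nonneg.2 (hrange x y).1)
              _ ≤ (((q:ℝ) : ℝ)  : ℝ*) * G.deg x := by
                  apply mul_le_mul_of_nonneg_right _ hD.le
                  exact coe_le_coe.2 hq.le
        · -- cross case: π x y = 0 and w x y is infinitesimal relative to deg x
          have hπ0 : π x y = 0 := by
            by_contra h
            exact hcase (hds x y (lt_of_le_of_ne (hrange x y).1 (Ne.symm h)))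
          have hdy : d x < d y := by omega
          have hwxy : w x y = ((a y x : ℝ) : ℝ*) * ε ^ (d y) := by
            show (if x = y then (0:ℝ*) else if d y ≤ d x then ((a x y : ℝ) : ℝ*) * ε ^ (d x)
              else ((a y x : ℝ) : ℝ*) * ε ^ (d y)) = _
            rw [if_neg hxy, if_neg hcase]
          rw [hπ0]
          apply rp_eq (G.p_nonneg x y)
          · intro q hq
            refine le_trans ?_ (G.p_nonneg x y)
            rw [← coe_rat]
            exact coe_le_coe.2 hq.le
          · intro q hq
            have hq0 : (0:ℝ) < (q:ℝ) := hq
            rw [hGp, div_le_iff₀ hD, ← coe_rat, hwxy]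
            set qR : ℝ := (q : ℝ) with hqR
            set t : ℝ := qR * β x / (a y x + 1) with ht
            have hden : (0:ℝ) < a y x + 1 := by nlinarith [ha0 y x]
            have ht0 : 0 < t := div_pos (by nlinarith [hβ x]) hden
            have hreal : a y x * t ≤ qR * β x := by
              rw [ht, ← mul_div_assoc, div_le_iff₀ hden]
              nlinarith [ha0 y x, hβ x]
            have hεt : ε ≤ ((t : ℝ) : ℝ*) := (epsilon_lt_pos (r := t) ht0).le
            calc ((a y x : ℝ) : ℝ*) * ε ^ (d y)
                ≤ ((a y x : ℝ) : ℝ*) * (ε ^ (d x + 1)) :=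
                  mul_le_mul_of_nonneg_left
                    (pow_le_pow_of_le_one hε0 hε1 (by omega)) (coe_nonneg.2 (ha0 _ _))
              _ = ((a y x : ℝ) : ℝ*) * ε * ε ^ (d x) := by ring
              _ ≤ ((a y x : ℝ) : ℝ*) * ((t : ℝ) : ℝ*) * ε ^ (d x) := by
                  apply mul_le_mul_of_nonneg_right _ (pow_nonneg hε0 _)
                  exact mul_le_mul_of_nonneg_left hεt (coe_nonneg.2 (ha0 _ _))
              _ ≤ ((qR * β x : ℝ) : ℝ*) * ε ^ (d x) := by
                  apply mul_le_mul_of_nonneg_right _ (pow_nonneg hε0 _)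
                  rw [← coe_mul]
                  exact coe_le_coe.2 hreal
              _ = (qR : ℝ*) * (((β x : ℝ) : ℝ*) * ε ^ (d x)) := by
                  push_cast
                  ring
              _ ≤ (qR : ℝ*) * G.deg x :=
                  mul_le_mul_of_nonneg_left hdegL (coe_nonneg.2 hq0.le)
    · rw [if_neg hxU]
      have hx1 : π x x = 1 := by
        by_contra h
        exact hxU h
      by_cases hxy : x = y
      · subst hxy
        rw [if_pos rfl]
        exact hx1.symm
      · rw [if_neg hxy, habs x hx1 y (fun h => hxy h.symm)]
  refine ⟨ℝ*, ε, epsilon_pos, ?_, G, U, hagrees⟩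
  intro n hn
  have h1 : ε < ((1 / (n:ℝ) : ℝ) : ℝ*) := epsilon_lt_pos (by positivity)
  rwa [show ((1 / (n:ℝ) : ℝ) : ℝ*) = 1 / (n : ℝ*) by
    rw [coe_div, coe_nat, coe_one]] at h1

end backward


/-- a transition matrix `π` over a finite set `V` with `π(x,x) = 0`
for every non-absorbing state arises as `π_U^b` for a weighted graph `b` over a
non-Archimedean ordered field iff there is `β : V → ℝ⁺` with
`π(x,y)β(x) = π(y,x)β(y)` on each irreducible class. -/
theorem realization_iff_reversible {V : Type*} [Fintype V] (π : V → V → ℝ)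
    (hrange : ∀ x y, 0 ≤ π x y ∧ π x y ≤ 1)
    (hrow : ∀ x, ∑ y, π x y = 1)
    (hdiag : ∀ x, π x x ≠ 1 → π x x = 0) :
    Nonempty (NARealization V π) ↔
      ∃ β : V → ℝ, (∀ x, 0 < β x) ∧
        ∀ x y, SameSCC π x y → π x y * β x = π y x * β y := by
  constructor
  · rintro ⟨R⟩
    exact forward π hrow R
  · rintro ⟨β, hβ, hbal⟩
    exact ⟨backward π hrange hrow hdiag β hβ hbal⟩

end NAG
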